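/- Let d ≥ 1, let μ be a rotation invariant probability measure on ℝ^d with ∫ ‖y‖ dμ(y) < ∞, let g ∈ ℝ^d and let h : ℝ^d → ℝ be bounded and measurable. Then ∫_{ℝ^d} (⟨y,g⟩)₊ ( h(R_g(y)) − h(y) ) dμ(y) = − ∫_{ℝ^d} ⟨y,g⟩ h(y) dμ(y). -/

import Mathlib

open MeasureTheory
open scoped InnerProductSpace

/-- The bounce map `R_g(y) = y - 2 (⟪g,y⟫/‖g‖²) g` (identity when `g = 0`). -/
noncomputable def bounce {E : Type*} [NormedAddCommGroup E] [InnerProductSpace ℝ E]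
    (g y : E) : E :=
  letI := Classical.dec (g = 0)
  if g = 0 then y else y - ((2 * ⟪g, y⟫_ℝ) / ‖g‖ ^ 2) • g

theorem bounce_rotation_invariant_identity
    {d : ℕ} (hd : 1 ≤ d)
    (μ : Measure (EuclideanSpace ℝ (Fin d))) [IsProbabilityMeasure μ]
    (hrot : ∀ O : EuclideanSpace ℝ (Fin d) ≃ₗᵢ[ℝ] EuclideanSpace ℝ (Fin d),
      Measure.map O μ = μ)
    (hmom : Integrable (fun y => ‖y‖) μ)
    (g : EuclideanSpace ℝ (Fin d))
    (h : EuclideanSpace ℝ (Fin d) → ℝ) (hmeas : Measurable h)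
    (hbdd : ∃ B : ℝ, ∀ y, |h y| ≤ B) :
    ∫ y, max ⟪y, g⟫_ℝ 0 * (h (bounce g y) - h y) ∂μ = -∫ y, ⟪y, g⟫_ℝ * h y ∂μ := by
  by_cases hg : g = 0
  · simp [hg, bounce, inner_zero_right]
  obtain ⟨B, hB⟩ := hbdd
  have hB0 : 0 ≤ B := le_trans (abs_nonneg _) (hB 0)
  -- the reflection as a linear isometry equiv
  set O : EuclideanSpace ℝ (Fin d) ≃ₗᵢ[ℝ] EuclideanSpace ℝ (Fin d) :=
    (Submodule.reflection (ℝ ∙ g)).trans (LinearIsometryEquiv.neg ℝ) with hOdef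
  have hOapp : ∀ y : EuclideanSpace ℝ (Fin d), O y = bounce g y := by
    intro y
    have : O y = -(Submodule.reflection (ℝ ∙ g) y) := rfl
    rw [this, Submodule.reflection_apply, Submodule.starProjection_singleton, bounce]
    simp only [hg, if_false]
    rw [RCLike.ofReal_real_eq_id, id_eq, neg_sub, two_smul, ← add_smul]
    congr 1
    ring_nf
  have hOO : ∀ y : EuclideanSpace ℝ (Fin d), O (O y) = y := by
    intro y
    show -(Submodule.reflection (ℝ ∙ g) (-(Submodule.reflection (ℝ ∙ g) y))) = y
    rw [map_neg, neg_neg, Submodule.reflection_reflection]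
  have hOg : ∀ y : EuclideanSpace ℝ (Fin d), ⟪O y, g⟫_ℝ = -⟪y, g⟫_ℝ := by
    intro y
    have hg' : O g = -g := by
      show -(Submodule.reflection (ℝ ∙ g) g) = -g
      rw [Submodule.reflection_mem_subspace_eq_self (Submodule.mem_span_singleton_self g)]
    calc ⟪O y, g⟫_ℝ = ⟪O y, O (O g)⟫_ℝ := by rw [hOO]
    _ = ⟪y, O g⟫_ℝ := O.inner_map_map _ _
    _ = -⟪y, g⟫_ℝ := by rw [hg']; exact inner_neg_right _ _
  -- integrability helpers
  have hmom' : Integrable (fun y : EuclideanSpace ℝ (Fin d) => (B * ‖g‖) * ‖y‖) μ := hmom.const_mul _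
  have hdom : ∀ (φ : EuclideanSpace ℝ (Fin d) → ℝ), Measurable φ → (∀ y, |φ y| ≤ B) →
      ∀ (c : EuclideanSpace ℝ (Fin d) → ℝ), Measurable c → (∀ y, |c y| ≤ ‖y‖ * ‖g‖) →
      Integrable (fun y => c y * φ y) μ := by
    intro φ hφm hφb c hcm hcb
    refine hmom'.mono ((hcm.mul hφm).aestronglyMeasurable) (Filter.Eventually.of_forall ?_)
    intro y
    have h1 : |c y * φ y| ≤ (‖y‖ * ‖g‖) * B := by
      rw [abs_mul]
      exact mul_le_mul (hcb y) (hφb y) (abs_nonneg _) (mul_nonneg (norm_nonneg _) (norm_nonneg _))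
    have h2 : (‖y‖ * ‖g‖) * B ≤ ‖(B * ‖g‖) * ‖y‖‖ := by
      rw [Real.norm_eq_abs, abs_of_nonneg (by positivity)]
      exact le_of_eq (by ring)
    calc ‖c y * φ y‖ = |c y * φ y| := Real.norm_eq_abs _
    _ ≤ _ := le_trans h1 h2
  have hinner_m : Measurable (fun y : EuclideanSpace ℝ (Fin d) => ⟪y, g⟫_ℝ) :=
    (continuous_id.inner continuous_const).measurable
  have hcb1 : ∀ y : EuclideanSpace ℝ (Fin d), |max ⟪y, g⟫_ℝ 0| ≤ ‖y‖ * ‖g‖ := by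
    intro y
    rw [abs_of_nonneg (le_max_right _ _)]
    exact max_le (le_trans (real_inner_le_norm _ _) le_rfl) (by positivity)
  have hcb2 : ∀ y : EuclideanSpace ℝ (Fin d), |max (-⟪y, g⟫_ℝ) 0| ≤ ‖y‖ * ‖g‖ := by
    intro y
    rw [abs_of_nonneg (le_max_right _ _)]
    refine max_le ?_ (by positivity)
    calc -⟪y, g⟫_ℝ ≤ |⟪y, g⟫_ℝ| := neg_le_abs _
    _ ≤ ‖y‖ * ‖g‖ := abs_real_inner_le_norm _ _
  have hcb3 : ∀ y : EuclideanSpace ℝ (Fin d), |⟪y, g⟫_ℝ| ≤ ‖y‖ * ‖g‖ := fun y => abs_real_inner_le_norm _ _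
  have hhO_m : Measurable (fun y : EuclideanSpace ℝ (Fin d) => h (bounce g y)) := by
    have : (fun y : EuclideanSpace ℝ (Fin d) => h (bounce g y)) = fun y => h (O y) := by
      funext y; rw [hOapp]
    rw [this]
    exact hmeas.comp O.continuous.measurable
  have hhO_b : ∀ y : EuclideanSpace ℝ (Fin d), |h (bounce g y)| ≤ B := fun y => hB _
  have hmax_m : Measurable (fun y : EuclideanSpace ℝ (Fin d) => max ⟪y, g⟫_ℝ 0) := hinner_m.max measurable_const
  have hmaxneg_m : Measurable (fun y : EuclideanSpace ℝ (Fin d) => max (-⟪y, g⟫_ℝ) 0) :=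
    hinner_m.neg.max measurable_const
  have hf1 : Integrable (fun y => max ⟪y, g⟫_ℝ 0 * h (bounce g y)) μ :=
    hdom _ hhO_m hhO_b _ hmax_m hcb1
  have hf2 : Integrable (fun y => max ⟪y, g⟫_ℝ 0 * h y) μ :=
    hdom _ hmeas hB _ hmax_m hcb1
  have hf4 : Integrable (fun y => max (-⟪y, g⟫_ℝ) 0 * h y) μ :=
    hdom _ hmeas hB _ hmaxneg_m hcb2
  -- change of variables
  have key : ∫ y, max ⟪y, g⟫_ℝ 0 * h (bounce g y) ∂μ
      = ∫ y, max (-⟪y, g⟫_ℝ) 0 * h y ∂μ := by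
    let e : EuclideanSpace ℝ (Fin d) ≃ᵐ EuclideanSpace ℝ (Fin d) := O.toHomeomorph.toMeasurableEquiv
    have hce : ⇑e = ⇑O := rfl
    have hmap : Measure.map e μ = μ := by rw [show ⇑e = ⇑O from rfl]; exact hrot O
    calc ∫ y, max ⟪y, g⟫_ℝ 0 * h (bounce g y) ∂μ
        = ∫ y, max ⟪y, g⟫_ℝ 0 * h (bounce g y) ∂(Measure.map e μ) := by rw [hmap]
    _ = ∫ y, max ⟪e y, g⟫_ℝ 0 * h (bounce g (e y)) ∂μ := integral_map_equiv e _
    _ = ∫ y, max (-⟪y, g⟫_ℝ) 0 * h y ∂μ := by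
        refine integral_congr_ae (Filter.Eventually.of_forall fun y => ?_)
        show max ⟪e y, g⟫_ℝ 0 * h (bounce g (e y)) = max (-⟪y, g⟫_ℝ) 0 * h y
        rw [hce, hOg, ← hOapp, hOO]
  have split : ∫ y, max ⟪y, g⟫_ℝ 0 * (h (bounce g y) - h y) ∂μ
      = (∫ y, max ⟪y, g⟫_ℝ 0 * h (bounce g y) ∂μ) - ∫ y, max ⟪y, g⟫_ℝ 0 * h y ∂μ := by
    rw [← integral_sub hf1 hf2]
    refine integral_congr_ae (Filter.Eventually.of_forall fun y => ?_)
    ring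
  rw [split, key, ← integral_sub hf4 hf2, ← integral_neg]
  refine integral_congr_ae (Filter.Eventually.of_forall fun y => ?_)
  have : max (-⟪y, g⟫_ℝ) 0 - max ⟪y, g⟫_ℝ 0 = -⟪y, g⟫_ℝ := by
    rcases le_total (⟪y, g⟫_ℝ) 0 with hc | hc
    · rw [max_eq_left (by linarith), max_eq_right hc]; ring
    · rw [max_eq_right (by linarith), max_eq_left hc]; ring
  calc max (-⟪y, g⟫_ℝ) 0 * h y - max ⟪y, g⟫_ℝ 0 * h y
      = (max (-⟪y, g⟫_ℝ) 0 - max ⟪y, g⟫_ℝ 0) * h y := by ring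
  _ = -(⟪y, g⟫_ℝ * h y) := by rw [this]; ring
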